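/- Let C : Fin m → Fin 3 → (Fin n × Bool) be a 3CNF with m clauses over n variables, and let G be its associated simple graph on vertex set Fin m × Fin 3. Then there exists an assignment σ : Fin n → Bool satisfying every clause (i.e., for every i ∈ Fin m there is a ∈ Fin 3 such that the literal C i a is true under σ) if and only if G contains a clique of cardinality m. -/

import Mathlib

/-- Two literals (variable, sign) are contradictory iff they have the same variable
and opposite signs. -/
def Contradictory {n : ℕ} (l l' : Fin n × Bool) : Prop :=
  l.1 = l'.1 ∧ l.2 ≠ l'.2

/-- The simple graph associated to a 3CNF `C` with `m` clauses over `n` variables: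
vertices are clause/position pairs, and `(i,a)` is adjacent to `(j,b)` iff `i ≠ j`
and the literals `C i a` and `C j b` are not contradictory. -/
def satGraph {m n : ℕ} (C : Fin m → Fin 3 → Fin n × Bool) :
    SimpleGraph (Fin m × Fin 3) where
  Adj v w := v.1 ≠ w.1 ∧ ¬ Contradictory (C v.1 v.2) (C w.1 w.2)
  symm := by
    constructor
    rintro v w ⟨h1, h2⟩
    exact ⟨h1.symm, fun ⟨he, hs⟩ => h2 ⟨he.symm, hs.symm⟩⟩
  loopless := by
    constructor
    rintro v ⟨h1, -⟩
    exact h1 rfl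

/-- A 3CNF is satisfiable iff its associated graph contains a clique of
cardinality `m`. -/
theorem sat_iff_clique {m n : ℕ} (C : Fin m → Fin 3 → Fin n × Bool) :
    (∃ σ : Fin n → Bool, ∀ i : Fin m, ∃ a : Fin 3, σ (C i a).1 = (C i a).2) ↔
    (∃ S : Finset (Fin m × Fin 3), (satGraph C).IsNClique m S) := by
  constructor
  · rintro ⟨σ, hσ⟩
    choose a ha using hσ
    refine ⟨Finset.image (fun i => (i, a i)) Finset.univ, ?_, ?_⟩
    · intro v hv w hw hvw
      simp only [Finset.coe_image, Set.mem_image] at hv hw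
      obtain ⟨i, -, rfl⟩ := hv
      obtain ⟨j, -, rfl⟩ := hw
      refine ⟨fun h => hvw (by simp_all), fun ⟨he, hs⟩ => ?_⟩
      exact hs ((ha i).symm.trans (he ▸ ha j))
    · rw [Finset.card_image_of_injective _ (fun i j h => by simpa using congrArg Prod.fst h)]
      simp
  · rintro ⟨S, hcl, hcard⟩
    have hinj : ∀ v ∈ S, ∀ w ∈ S, v.1 = w.1 → v = w := by
      intro v hv w hw h
      by_contra hne
      exact (hcl hv hw hne).1 h
    have himg : Finset.image Prod.fst S = Finset.univ := by
      apply Finset.eq_univ_of_card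
      rw [Finset.card_image_of_injOn hinj, hcard, Fintype.card_fin]
    have hex : ∀ i : Fin m, ∃ v, v ∈ S ∧ v.1 = i := by
      intro i
      have : i ∈ Finset.image Prod.fst S := himg ▸ Finset.mem_univ i
      simpa using this
    choose f hfS hf1 using hex
    refine ⟨fun v => decide (∃ i, C (f i).1 (f i).2 = (v, true)), fun i => ⟨(f i).2, ?_⟩⟩
    set l := C (f i).1 (f i).2 with hl
    have hfi : C i (f i).2 = l := by rw [hl, hf1]
    rw [hfi]
    cases hs : l.2
    · simp only [decide_eq_false_iff_not]
      rintro ⟨j, hj⟩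
      have hij : (f j).1 ≠ (f i).1 := by
        intro h
        have := hinj _ (hfS j) _ (hfS i) h
        rw [this, ← hl] at hj
        rw [hj] at hs
        simp at hs
      have := (hcl (hfS j) (hfS i) (fun h => hij (congrArg Prod.fst h))).2
      exact this ⟨by rw [hj, ← hl], by rw [hj, hs]; simp⟩
    · simp only [decide_eq_true_eq]
      exact ⟨i, by rw [← hl, ← hs]⟩
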